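/- Let G be a connected graph on n vertices such that |B| < n/4 for every block B ∈ 𝓑(G), and let T_𝓑 be a reduced block tree of G. Then there exist a vertex B* ∈ V(T_𝓑) and a colouring φ : V(T_𝓑) \ {B*} → {red, blue} such that every connected component of T_𝓑 − B* is monochromatic, and, setting S_red = {v ∈ B \ B* : B ∈ 𝓑(G), φ(B) = red} and S_blue = {v ∈ B \ B* : B ∈ 𝓑(G), φ(B) = blue}, it holds that |S_blue| ≤ |S_red| ≤ 3|S_blue|. -/

import Mathlib

/-- `B` satisfies the defining property of a block: for any two distinct vertices
`x, y ∈ B` with `xy ∉ E(G)`, one cannot separate `x` from `y` by removing fewer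
than 2 vertices (i.e. after deleting any set `S` of fewer than 2 vertices avoiding
`x` and `y`, `x` and `y` are still joined by a path). -/
def BlockProp {V : Type*} (G : SimpleGraph V) (B : Set V) : Prop :=
  ∀ x ∈ B, ∀ y ∈ B, x ≠ y → ¬ G.Adj x y →
    ∀ S : Set V, S.ncard < 2 → ∀ (hx : x ∉ S) (hy : y ∉ S),
      (G.induce Sᶜ).Reachable ⟨x, hx⟩ ⟨y, hy⟩

/-- The block decomposition `𝓑(G)`: the maximal vertex sets satisfying `BlockProp`. -/
def blocks {V : Type*} (G : SimpleGraph V) : Set (Set V) :=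
  {B | Maximal (fun A => BlockProp G A) B}

/-- The block graph `G_𝓑`: vertices are the blocks of `G`, two distinct blocks
being adjacent iff they intersect. -/
def blockGraph {V : Type*} (G : SimpleGraph V) : SimpleGraph ↥(blocks G) where
  Adj A B := A ≠ B ∧ ((A : Set V) ∩ (B : Set V)).Nonempty
  symm := by
    constructor
    rintro A B ⟨h1, h2⟩
    exact ⟨h1.symm, by rwa [Set.inter_comm]⟩
  loopless := ⟨fun A h => h.1 rfl⟩

/-- The vertices of `G` lying in some block of colour `c` (other than `B*`),
excluding the vertices of `B*` itself. -/
def colourClass {V : Type*} (G : SimpleGraph V) (Bs : ↥(blocks G))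
    (φ : ↥(blocks G) → Bool) (c : Bool) : Set V :=
  {x | ∃ A : ↥(blocks G), A ≠ Bs ∧ φ A = c ∧ x ∈ (A : Set V) ∧ x ∉ (Bs : Set V)}


section Aux

variable {V : Type*} [Fintype V] {G : SimpleGraph V}

/-- Two vertices of a common set with `BlockProp` are reachable after deleting `< 2` vertices. -/
lemma block_reach {B : Set V} (hB : BlockProp G B) {x y : V} (hx : x ∈ B) (hy : y ∈ B)
    {S : Set V} (hS : S.ncard < 2) (hxS : x ∉ S) (hyS : y ∉ S) :
    (G.induce Sᶜ).Reachable ⟨x, hxS⟩ ⟨y, hyS⟩ := by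
  rcases eq_or_ne x y with rfl | hne
  · rfl
  rcases (em (G.Adj x y)) with hadj | hnadj
  · exact SimpleGraph.Adj.reachable (by exact hadj)
  · exact hB x hx y hy hne hnadj S hS hxS hyS

lemma exists_block_superset {A : Set V} (hA : BlockProp G A) :
    ∃ B ∈ blocks G, A ⊆ B := by
  obtain ⟨B, hB, hmax⟩ := Set.Finite.exists_maximalFor (id : Set V → Set V)
    {C | BlockProp G C ∧ A ⊆ C} (Set.finite_univ.subset (Set.subset_univ _)) ⟨A, hA, le_refl _⟩
  refine ⟨B, ⟨hB.1, fun C hC hBC => ?_⟩, hB.2⟩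
  exact hmax ⟨hC, hB.2.trans hBC⟩ hBC

lemma blockProp_singleton (x : V) : BlockProp G {x} := by
  intro a ha b hb hab
  rw [Set.mem_singleton_iff] at ha hb
  exact absurd (ha.trans hb.symm) hab

lemma blockProp_pair {x y : V} (h : G.Adj x y) : BlockProp G {x, y} := by
  intro a ha b hb hab hnadj
  exfalso
  rcases ha with rfl | rfl <;> rcases hb with rfl | rfl
  · exact hab rfl
  · exact hnadj h
  · exact hnadj h.symm
  · exact hab rfl

lemma block_nonempty [Nonempty V] {B : Set V} (hB : B ∈ blocks G) : B.Nonempty := by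
  rcases B.eq_empty_or_nonempty with rfl | h
  · obtain ⟨x⟩ := ‹Nonempty V›
    have := hB.2 (blockProp_singleton x) (Set.empty_subset _)
    simpa using this (Set.mem_singleton x)
  · exact h

lemma exists_adj (hG : G.Connected) (h2 : 1 < Fintype.card V) (x : V) : ∃ y, G.Adj x y := by
  obtain ⟨z, hz⟩ := Fintype.exists_ne_of_one_lt_card h2 x
  obtain ⟨w⟩ := hG.preconnected x z
  cases w with
  | nil => exact absurd rfl hz.symm
  | cons h p => exact ⟨_, h⟩

/-- chain of blocks: reach from an element of `B a` to an element of `B b`, `a ≤ b`. -/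
lemma chain_up {B : ℕ → Set V} (hB : ∀ i, BlockProp G (B i)) {z : ℕ → V}
    (hz : ∀ i, z i ∈ B i ∩ B (i + 1)) {S : Set V} (hS : S.ncard < 2) (a : ℕ) :
    ∀ b, a ≤ b → (∀ i, a ≤ i → i < b → z i ∉ S) →
    ∀ u, u ∈ B a → ∀ v, v ∈ B b → ∀ (hu : u ∉ S) (hv : v ∉ S),
    (G.induce Sᶜ).Reachable ⟨u, hu⟩ ⟨v, hv⟩ := by
  intro b hab
  induction b, hab using Nat.le_induction with
  | base => exact fun _ u hu v hv huS hvS => block_reach (hB a) hu hv hS huS hvS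
  | succ b hab ih =>
    intro hziS u hu v hv huS hvS
    have hzbS : z b ∉ S := hziS b hab (Nat.lt_succ_self b)
    have h1 := ih (fun i hai hib => hziS i hai (hib.trans (Nat.lt_succ_self b)))
      u hu (z b) (hz b).1 huS hzbS
    exact h1.trans (block_reach (hB (b + 1)) (hz b).2 hv hS hzbS hvS)

lemma merge_cycle {N : ℕ} (hN : 2 ≤ N) {B : ℕ → Set V} (hB : ∀ i, B i ∈ blocks G)
    (hper : ∀ i, B (i + N) = B i) {z : ℕ → V}
    (hz : ∀ i, z i ∈ B i ∩ B (i + 1))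
    (hdist : ∀ i j, i < j → j < N → z i ≠ z j) :
    BlockProp G (⋃ i ∈ Finset.range N, B i) := by
  have hBp : ∀ i, BlockProp G (B i) := fun i => (hB i).1
  -- main asymmetric claim
  have main : ∀ a b, a ≤ b → b < N → ∀ (S : Set V), S.ncard < 2 →
      ∀ u, u ∈ B a → ∀ v, v ∈ B b → ∀ (hu : u ∉ S) (hv : v ∉ S),
      (G.induce Sᶜ).Reachable ⟨u, hu⟩ ⟨v, hv⟩ := by
    intro a b hab hbN S hS u hu v hv huS hvS
    by_cases hfwd : ∀ i, a ≤ i → i < b → z i ∉ S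
    · exact chain_up hBp hz hS a b hab hfwd u hu v hv huS hvS
    · push_neg at hfwd
      obtain ⟨m, ham, hmb, hmS⟩ := hfwd
      -- every other connector is not in S
      have hother : ∀ i, i < N → i ≠ m → z i ∉ S := by
        intro i hiN him hiS
        have hzne : z i ≠ z m := by
          rcases lt_or_gt_of_ne him with h | h
          · exact hdist i m h (lt_of_lt_of_le hmb hbN.le)
          · exact fun hh => hdist m i h hiN hh.symm
        have hsub : ({z i, z m} : Set V) ⊆ S := by
          intro t ht; rcases ht with rfl | rfl
          · exact hiS
          · exact hmS
        have := Set.ncard_le_ncard hsub (Set.toFinite S)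
        rw [Set.ncard_pair hzne] at this
        omega
      -- backward route via B 0 and B (N-1)
      have hzN1 : z (N - 1) ∈ B 0 := by
        have := (hz (N - 1)).2
        rwa [show N - 1 + 1 = 0 + N by omega, hper 0] at this
      have hzN1S : z (N - 1) ∉ S :=
        hother (N - 1) (by omega) (by omega)
      have hdown1 : ∀ i, 0 ≤ i → i < a → z i ∉ S := by
        intro i _ hia
        exact hother i (by omega) (by omega)
      have hdown2 : ∀ i, b ≤ i → i < N - 1 → z i ∉ S := by
        intro i hbi hiN
        exact hother i (by omega) (by omega)
      have r1 := (chain_up hBp hz hS 0 a (Nat.zero_le a) hdown1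
        (z (N - 1)) hzN1 u hu hzN1S huS).symm
      have r2 := (chain_up hBp hz hS b (N - 1) (by omega) hdown2
        v hv (z (N - 1)) (hz (N - 1)).1 hvS hzN1S).symm
      exact r1.trans r2
  intro u hu v hv hne hnadj S hS huS hvS
  simp only [Set.mem_iUnion, Finset.mem_range] at hu hv
  obtain ⟨a, haN, hua⟩ := hu
  obtain ⟨b, hbN, hvb⟩ := hv
  rcases le_or_gt a b with hab | hba
  · exact main a b hab hbN S hS u hua v hvb huS hvS
  · exact (main b a hba.le haN S hS v hvb u hua hvS huS).symm

lemma block_eq_of_le {A C U : Set V} (hA : A ∈ blocks G) (hC : C ∈ blocks G)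
    (hU : BlockProp G U) (hAU : A ⊆ U) (hCU : C ⊆ U) : A = C :=
  le_antisymm (hAU.trans (hC.2 hU hCU)) (hCU.trans (hA.2 hU hAU))

/-- distinct blocks meet in at most one vertex -/
lemma inter_subsingleton {A C : Set V} (hA : A ∈ blocks G) (hC : C ∈ blocks G)
    (hne : A ≠ C) {x y : V} (hx : x ∈ A ∩ C) (hy : y ∈ A ∩ C) : x = y := by
  by_contra hxy
  set B : ℕ → Set V := fun i => if i % 2 = 0 then A else C with hBdef
  set z : ℕ → V := fun i => if i % 2 = 0 then x else y with hzdef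
  have hB : ∀ i, B i ∈ blocks G := by
    intro i; simp only [hBdef]; split <;> assumption
  have hper : ∀ i, B (i + 2) = B i := by
    intro i; simp only [hBdef, Nat.add_mod_right]
  have hz : ∀ i, z i ∈ B i ∩ B (i + 1) := by
    intro i
    rcases Nat.even_or_odd i with ⟨k, hk⟩ | ⟨k, hk⟩
    · have h1 : i % 2 = 0 := by omega
      have h2 : (i + 1) % 2 = 1 := by omega
      simp only [hBdef, hzdef, h1, h2]
      simpa using ⟨hx.1, hx.2⟩
    · have h1 : i % 2 = 1 := by omega
      have h2 : (i + 1) % 2 = 0 := by omega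
      simp only [hBdef, hzdef, h1, h2]
      simpa using ⟨hy.2, hy.1⟩
  have hdist : ∀ i j, i < j → j < 2 → z i ≠ z j := by
    intro i j hij hj2
    have : i = 0 ∧ j = 1 := by omega
    simp only [hzdef, this.1, this.2]
    simpa using hxy
  have hbp := merge_cycle (le_refl 2) hB hper hz hdist
  have hsub : ∀ i < 2, B i ⊆ ⋃ i ∈ Finset.range 2, B i := by
    intro i hi t ht
    simp only [Set.mem_iUnion, Finset.mem_range]
    exact ⟨i, hi, ht⟩
  have h0 : A ⊆ ⋃ i ∈ Finset.range 2, B i := by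
    have := hsub 0 (by omega); simpa [hBdef] using this
  have h1 : C ⊆ ⋃ i ∈ Finset.range 2, B i := by
    have := hsub 1 (by omega); simpa [hBdef] using this
  exact hne (block_eq_of_le hA hC hbp h0 h1)


/-- All connectors in a cycle of at least 3 distinct blocks are equal. -/
lemma star_cycle : ∀ N, 3 ≤ N → ∀ (B : ℕ → Set V) (z : ℕ → V),
    (∀ i, B i ∈ blocks G) → (∀ i, B (i + N) = B i) → (∀ i, z (i + N) = z i) →
    (∀ i j, i < j → j < N → B i ≠ B j) → (∀ i, z i ∈ B i ∩ B (i + 1)) →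
    ∀ p q, p < N → q < N → z p = z q := by
  intro N
  induction N using Nat.strong_induction_on with
  | _ N IH =>
  intro hN3 B z hB hperB hperz hdistB hz
  -- periodic reduction helpers
  have hBmod : ∀ a, B a = B (a % N) := by
    intro a
    induction a using Nat.strong_induction_on with
    | _ a iha =>
      rcases lt_or_ge a N with h | h
      · rw [Nat.mod_eq_of_lt h]
      · have h1 : a = (a - N) + N := by omega
        rw [h1, hperB, iha (a - N) (by omega)]
        rw [Nat.add_mod_right]
  have hzmod : ∀ a, z a = z (a % N) := by
    intro a
    induction a using Nat.strong_induction_on with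
    | _ a iha =>
      rcases lt_or_ge a N with h | h
      · rw [Nat.mod_eq_of_lt h]
      · have h1 : a = (a - N) + N := by omega
        rw [h1, hperz, iha (a - N) (by omega)]
        rw [Nat.add_mod_right]
  have hBne : ∀ a b, a % N ≠ b % N → B a ≠ B b := by
    intro a b hab
    rw [hBmod a, hBmod b]
    have haN : a % N < N := Nat.mod_lt _ (by omega)
    have hbN : b % N < N := Nat.mod_lt _ (by omega)
    rcases lt_or_gt_of_ne hab with h | h
    · exact hdistB _ _ h hbN
    · exact (hdistB _ _ h haN).symm
  have hresne : ∀ a b : ℕ, a < b → b - a < N → a % N ≠ b % N := by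
    intro a b hab hdiff heq
    have h0 : (b - a) % N = 0 := Nat.sub_mod_eq_zero_of_mod_eq heq.symm
    rw [Nat.mod_eq_of_lt hdiff] at h0
    omega
  -- the arc lemma
  have arc : ∀ s L, 1 ≤ L → L < N → z s = z (s + L) →
      ∀ t, 0 < t → t < L → z (s + t) = z s := by
    intro s L hL1 hLN hclose t ht0 htL
    rcases Nat.lt_or_ge L 3 with hL3 | hL3
    · -- L = 1 or 2
      interval_cases L
      · omega
      · -- L = 2, t = 1
        have ht1 : t = 1 := by omega
        subst ht1
        have hne12 : B (s + 1) ≠ B (s + 2) :=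
          hBne _ _ (hresne (s+1) (s+2) (by omega) (by omega))
        have h1 : z (s + 1) ∈ B (s + 1) ∩ B (s + 2) := by
          have := hz (s + 1); rwa [show s + 1 + 1 = s + 2 by ring] at this
        have h2 : z s ∈ B (s + 1) ∩ B (s + 2) := by
          constructor
          · exact (hz s).2
          · rw [hclose]; exact (hz (s + 2)).1
        exact inter_subsingleton (hB (s+1)) (hB (s+2)) hne12 h1 h2
    · -- L ≥ 3 : recurse
      set B' : ℕ → Set V := fun i => B (s + 1 + i % L) with hB'def
      set z' : ℕ → V := fun i => if i % L = L - 1 then z s else z (s + 1 + i % L) with hz'def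
      have hall := IH L hLN hL3 B' z'
        (fun i => hB _)
        (fun i => by simp only [hB'def, Nat.add_mod_right])
        (fun i => by simp only [hz'def, Nat.add_mod_right])
        (by
          intro i j hij hjL
          simp only [hB'def]
          rw [Nat.mod_eq_of_lt (hij.trans hjL), Nat.mod_eq_of_lt hjL]
          exact hBne _ _ (hresne _ _ (by omega) (by omega)))
        (by
          intro i
          set t' := i % L with ht'def
          have ht'L : t' < L := Nat.mod_lt _ (by omega)
          rcases Nat.lt_or_ge t' (L - 1) with h | h
          · have h1 : (i + 1) % L = t' + 1 := by
              rw [Nat.add_mod, ← ht'def, Nat.mod_eq_of_lt (show 1 < L by omega),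
                Nat.mod_eq_of_lt (by omega)]
            simp only [hz'def, hB'def, ← ht'def, h1]
            rw [if_neg (by omega)]
            have := hz (s + 1 + t')
            constructor
            · exact this.1
            · have harg : s + 1 + t' + 1 = s + 1 + (t' + 1) := by ring
              rw [← harg]; exact this.2
          · have ht'eq : t' = L - 1 := by omega
            have h1 : (i + 1) % L = 0 := by
              rw [Nat.add_mod, ← ht'def, ht'eq, Nat.mod_eq_of_lt (show 1 < L by omega),
                Nat.sub_add_cancel (show 1 ≤ L by omega), Nat.mod_self]
            simp only [hz'def, hB'def, ← ht'def, h1, ht'eq, if_true]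
            constructor
            · rw [show s + 1 + (L - 1) = s + L by omega, hclose]
              exact (hz (s + L)).1
            · simpa using (hz s).2)
      have h1 := hall (t - 1) (L - 1) (by omega) (by omega)
      simp only [hz'def] at h1
      rw [Nat.mod_eq_of_lt (by omega : t - 1 < L), Nat.mod_eq_of_lt (by omega : L - 1 < L)] at h1
      rw [if_neg (by omega), if_pos rfl] at h1
      have harg : s + 1 + (t - 1) = s + t := by omega
      rwa [harg] at h1
  -- main case split
  by_cases hdz : ∀ i j, i < j → j < N → z i ≠ z j
  · -- all connectors distinct: blocks merge, contradiction
    exfalso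
    have hbp := merge_cycle (by omega) hB hperB hz hdz
    have hsub : ∀ i, i < N → B i ⊆ ⋃ i ∈ Finset.range N, B i := by
      intro i hi t ht
      simp only [Set.mem_iUnion, Finset.mem_range]
      exact ⟨i, hi, ht⟩
    exact hdistB 0 1 (by omega) (by omega)
      (block_eq_of_le (hB 0) (hB 1) hbp (hsub 0 (by omega)) (hsub 1 (by omega)))
  · push_neg at hdz
    obtain ⟨p, q, hpq, hqN, hzpq⟩ := hdz
    -- all connectors are equal to z p
    have hallp : ∀ i, i < N → z i = z p := by
      have harc1 : ∀ i, p < i → i < q → z i = z p := by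
        intro i hpi hiq
        have := arc p (q - p) (by omega) (by omega)
          (by rw [show p + (q - p) = q by omega]; exact hzpq) (i - p) (by omega) (by omega)
        rwa [show p + (i - p) = i by omega] at this
      have harc2 : ∀ i, q < i → i < p + N → z i = z p := by
        intro i hqi hiN
        have hclose2 : z q = z (q + (N - q + p)) := by
          rw [show q + (N - q + p) = p + N by omega, hperz p, hzpq]
        have := arc q (N - q + p) (by omega) (by omega) hclose2 (i - q) (by omega) (by omega)
        rw [show q + (i - q) = i by omega] at this
        rw [this, ← hzpq]
      intro i hiN
      rcases Nat.lt_trichotomy i p with h | h | h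
      · have := harc2 (i + N) (by omega) (by omega)
        rwa [hperz] at this
      · rw [h]
      · rcases Nat.lt_trichotomy i q with h2 | h2 | h2
        · exact harc1 i h h2
        · rw [h2, ← hzpq]
        · exact harc2 i h2 (by omega)
    intro a b haN hbN
    rw [hallp a haN, hallp b hbN]


end Aux

section Generic
variable {W : Type*} {Γ : SimpleGraph W}

lemma reach_induce_of_walk {s : Set W} {u v : W} (w : Γ.Walk u v) :
    ∀ (hw : ∀ x ∈ w.support, x ∈ s),
    (Γ.induce s).Reachable ⟨u, hw u w.start_mem_support⟩ ⟨v, hw v w.end_mem_support⟩ := by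
  induction w with
  | nil => intro hw; rfl
  | @cons a b c hadj q ih =>
    intro hw
    have hb : b ∈ s := hw b (by simp [SimpleGraph.Walk.support_cons])
    have h1 : (Γ.induce s).Adj ⟨a, hw a (SimpleGraph.Walk.start_mem_support _)⟩ ⟨b, hb⟩ := by
      exact hadj
    exact (h1.reachable).trans (ih (fun x hx => hw x (by simp [SimpleGraph.Walk.support_cons, hx])))

lemma walk_of_reach_induce {s : Set W} {a b : ↥s} (h : (Γ.induce s).Reachable a b) :
    ∃ w : Γ.Walk a.1 b.1, ∀ x ∈ w.support, x ∈ s := by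
  obtain ⟨w⟩ := h
  induction w with
  | nil => exact ⟨SimpleGraph.Walk.nil, by simp [a.2]⟩
  | @cons u x y hadj q ih =>
    obtain ⟨w', hw'⟩ := ih
    refine ⟨SimpleGraph.Walk.cons (show Γ.Adj u.1 x.1 from hadj) w', ?_⟩
    intro t ht
    rw [SimpleGraph.Walk.support_cons, List.mem_cons] at ht
    rcases ht with rfl | ht
    · exact u.2
    · exact hw' t ht

lemma getVert_inj {u v : W} {p : Γ.Walk u v} :
    p.IsPath → ∀ i j, i ≤ p.length → j ≤ p.length → p.getVert i = p.getVert j → i = j := by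
  induction p with
  | nil => intro _ i j hi hj _; simp at hi hj; omega
  | @cons a b c hadj q ih =>
    intro hp i j hi hj hij
    rw [SimpleGraph.Walk.cons_isPath_iff] at hp
    match i, j with
    | 0, 0 => rfl
    | 0, j + 1 =>
      exfalso
      apply hp.2
      rw [SimpleGraph.Walk.mem_support_iff_exists_getVert]
      refine ⟨j, ?_, ?_⟩
      · rw [SimpleGraph.Walk.getVert_zero] at hij
        simp only [SimpleGraph.Walk.getVert_cons_succ] at hij
        exact hij.symm
      · simpa using hj
    | i + 1, 0 =>
      exfalso
      apply hp.2
      rw [SimpleGraph.Walk.mem_support_iff_exists_getVert]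
      refine ⟨i, ?_, ?_⟩
      · rw [SimpleGraph.Walk.getVert_zero] at hij
        simp only [SimpleGraph.Walk.getVert_cons_succ] at hij
        exact hij
      · simpa using hi
    | i + 1, j + 1 =>
      simp only [SimpleGraph.Walk.getVert_cons_succ] at hij
      have := ih hp.1 i j (by simpa using hi) (by simpa using hj) hij
      omega

/-- In a connected graph, from any `A ≠ b` we can reach, inside `Γ - b`, some
neighbour `D` of `b`. -/
lemma exists_nbr_reach (hc : Γ.Connected) {b A : W} (hA : A ≠ b) :
    ∃ D, Γ.Adj D b ∧ ∃ hD : D ≠ b,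
      (Γ.induce {X | X ≠ b}).Reachable ⟨A, hA⟩ ⟨D, hD⟩ := by
  obtain ⟨w⟩ := hc.preconnected A b
  clear hc
  induction w with
  | nil => exact absurd rfl hA
  | @cons u x y hadj q ih =>
    by_cases hx : x = y
    · subst hx
      exact ⟨u, hadj, hA, by rfl⟩
    · obtain ⟨D, hD1, hD2, hD3⟩ := ih hx
      refine ⟨D, hD1, hD2, ?_⟩
      have h1 : (Γ.induce {X : W | X ≠ y}).Adj ⟨u, hA⟩ ⟨x, hx⟩ := by exact hadj
      exact h1.reachable.trans hD3

/-- In a tree, if `A` cannot reach `b` avoiding `D`, it can reach `D` avoiding `b`. -/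
lemma tree_switch (hc : Γ.Connected) {b D A : W} (hadj : Γ.Adj D b) (hA : A ≠ b) (hAD : A ≠ D)
    (hnr : ¬ (Γ.induce {X | X ≠ D}).Reachable ⟨A, hAD⟩ ⟨b, hadj.ne'⟩) :
    (Γ.induce {X | X ≠ b}).Reachable ⟨A, hA⟩ ⟨D, hadj.ne⟩ := by
  classical
  obtain ⟨w0⟩ := hc.preconnected A b
  let p : Γ.Path A b := w0.toPath
  by_cases hD : D ∈ (p : Γ.Walk A b).support
  · set q := (p : Γ.Walk A b).takeUntil D hD with hqdef
    have hbq : ∀ x ∈ q.support, x ∈ {X : W | X ≠ b} := by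
      intro x hx hxb
      have hbmem0 : b ∈ q.support := by rw [← hxb]; exact hx
      -- b in the take-until part contradicts nodup support
      have hsplit := SimpleGraph.Walk.take_spec (p : Γ.Walk A b) hD
      have hnodup := p.2.support_nodup
      rw [← hsplit, SimpleGraph.Walk.support_append] at hnodup
      have hdisj := List.disjoint_of_nodup_append hnodup
      apply hdisj hbmem0
      have hbmem : b ∈ ((p : Γ.Walk A b).dropUntil D hD).support :=
        SimpleGraph.Walk.end_mem_support _
      rw [SimpleGraph.Walk.support_eq_cons ((p : Γ.Walk A b).dropUntil D hD),
        List.mem_cons] at hbmem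
      rcases hbmem with h1 | h1
      · exact absurd h1 hadj.ne'
      · exact h1
    exact reach_induce_of_walk q hbq
  · exfalso
    apply hnr
    have hDp : ∀ x ∈ (p : Γ.Walk A b).support, x ∈ {X : W | X ≠ D} :=
      fun x hx hxD => hD (hxD ▸ hx)
    exact reach_induce_of_walk (p : Γ.Walk A b) hDp

/-- In a tree, `A` cannot both reach `b` avoiding `D` and reach `D` avoiding `b`,
when `D` and `b` are adjacent. -/
lemma tree_sep (hT : Γ.IsTree) {b D A : W} (hadj : Γ.Adj D b) (hA : A ≠ b) (hAD : A ≠ D)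
    (h1 : (Γ.induce {X | X ≠ D}).Reachable ⟨A, hAD⟩ ⟨b, hadj.ne'⟩)
    (h2 : (Γ.induce {X | X ≠ b}).Reachable ⟨A, hA⟩ ⟨D, hadj.ne⟩) : False := by
  obtain ⟨w1, hw1⟩ := walk_of_reach_induce h1
  obtain ⟨w2, hw2⟩ := walk_of_reach_induce h2
  have hbridge : Γ.IsBridge s(D, b) :=
    (SimpleGraph.isAcyclic_iff_forall_edge_isBridge.mp hT.IsAcyclic) hadj
  rw [SimpleGraph.isBridge_iff_adj_and_forall_walk_mem_edges] at hbridge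
  have hwalk : s(D, b) ∈ (w2.reverse.append w1).edges := hbridge _
  rw [SimpleGraph.Walk.edges_append, List.mem_append] at hwalk
  rcases hwalk with h | h
  · rw [SimpleGraph.Walk.edges_reverse, List.mem_reverse] at h
    have := SimpleGraph.Walk.snd_mem_support_of_mem_edges w2 h
    exact (hw2 b this) rfl
  · have := SimpleGraph.Walk.fst_mem_support_of_mem_edges w1 h
    exact (hw1 D this) rfl

end Generic

section Aux2

variable {V : Type*} [Fintype V] {G : SimpleGraph V}


lemma block_two_le (hG : G.Connected) (h2 : 1 < Fintype.card V) {B : Set V}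
    (hB : B ∈ blocks G) : 2 ≤ B.ncard := by
  haveI : Nonempty V := Fintype.card_pos_iff.mp (by omega)
  have hne := block_nonempty hB
  have h1 : 1 ≤ B.ncard := (Set.ncard_pos (Set.toFinite _)).mpr hne
  by_contra h
  have hcard1 : B.ncard = 1 := by omega
  obtain ⟨x, hx⟩ := Set.ncard_eq_one.mp hcard1
  subst hx
  obtain ⟨y, hy⟩ := exists_adj hG h2 x
  have hsub : ({x} : Set V) ⊆ {x, y} := by simp
  have hmax := hB.2 (blockProp_pair hy) hsub
  have hyx : y ∈ ({x} : Set V) := hmax (by simp)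
  rw [Set.mem_singleton_iff] at hyx
  exact hy.ne hyx.symm


/-- every block on a `T`-path between two blocks sharing `x` contains `x` -/
lemma path_mem {T : SimpleGraph ↥(blocks G)} (hT : T ≤ blockGraph G)
    {Av Cv : ↥(blocks G)} {p : T.Walk Av Cv} (hp : p.IsPath) {x : V}
    (hxA : x ∈ (Av : Set V)) (hxC : x ∈ (Cv : Set V)) :
    ∀ D ∈ p.support, x ∈ (D : Set V) := by
  set m := p.length with hm
  have hmain : ∀ i, i ≤ m → x ∈ (p.getVert i : Set V) := by
    rcases Nat.lt_or_ge m 2 with hm2 | hm2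
    · -- short paths
      intro i hi
      rcases Nat.eq_zero_or_pos i with rfl | hpos
      · rwa [p.getVert_zero]
      · rw [p.getVert_of_length_le (by omega)]
        exact hxC
    · -- long paths: use star
      set N := m + 1 with hN
      have hN3 : 3 ≤ N := by omega
      have hconn : ∀ t, t < m → ∃ y : V, y ∈ (p.getVert t : Set V) ∩ (p.getVert (t+1) : Set V) := by
        intro t ht
        exact (show (blockGraph G).Adj (p.getVert t) (p.getVert (t+1)) from hT (p.adj_getVert_succ (by omega))).2
      set B : ℕ → Set V := fun i => ((p.getVert (i % N) : ↥(blocks G)) : Set V) with hBdef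
      set z : ℕ → V := fun i => if h : i % N < m then (hconn _ h).choose else x with hzdef
      have hB : ∀ i, B i ∈ blocks G := fun i => (p.getVert (i % N)).2
      have hperB : ∀ i, B (i + N) = B i := by
        intro i; simp only [hBdef, Nat.add_mod_right]
      have hperz : ∀ i, z (i + N) = z i := by
        intro i; simp only [hzdef, Nat.add_mod_right]
      have hdistB : ∀ i j, i < j → j < N → B i ≠ B j := by
        intro i j hij hjN heq
        simp only [hBdef] at heq
        have heq2 : p.getVert (i % N) = p.getVert (j % N) := Subtype.coe_injective heq
        rw [Nat.mod_eq_of_lt (hij.trans hjN), Nat.mod_eq_of_lt hjN] at heq2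
        have := getVert_inj hp i j (by omega) (by omega) heq2
        omega
      have hz : ∀ i, z i ∈ B i ∩ B (i + 1) := by
        intro i
        set t := i % N with htdef
        have htN : t < N := Nat.mod_lt _ (by omega)
        rcases Nat.lt_or_ge t m with ht | ht
        · have h1 : (i + 1) % N = t + 1 := by
            rw [Nat.add_mod, ← htdef, Nat.mod_eq_of_lt (show 1 < N by omega),
              Nat.mod_eq_of_lt (by omega)]
          simp only [hzdef, hBdef, ← htdef, h1]
          rw [dif_pos ht]
          exact (hconn t ht).choose_spec
        · have hteq : t = m := by omega
          have h1 : (i + 1) % N = 0 := by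
            rw [Nat.add_mod, ← htdef, hteq, Nat.mod_eq_of_lt (show 1 < N by omega), hN]
            simp
          simp only [hzdef, hBdef, ← htdef, h1, hteq]
          rw [dif_neg (by omega)]
          constructor
          · rw [show p.getVert m = Cv from p.getVert_length]
            exact hxC
          · rw [p.getVert_zero]
            exact hxA
      have hall := star_cycle N hN3 B z hB hperB hperz hdistB hz
      intro i hi
      have hzm : z m = x := by
        simp only [hzdef, Nat.mod_eq_of_lt (show m < N by omega)]
        rw [dif_neg (by omega)]
      have hzi : z i = x := by
        rw [hall i m (by omega) (by omega), hzm]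
      have := (hz i).1
      rw [hzi] at this
      simpa only [hBdef, Nat.mod_eq_of_lt (show i < N by omega)] using this
  intro D hD
  rw [SimpleGraph.Walk.mem_support_iff_exists_getVert] at hD
  obtain ⟨i, hgv, hi⟩ := hD
  rw [← hgv]
  exact hmain i hi

/-- two blocks sharing a vertex outside `Bs` are in the same component of `T - Bs` -/
lemma key_reach {T : SimpleGraph ↥(blocks G)} (hTree : T.IsTree) (hT : T ≤ blockGraph G)
    {Bs A C : ↥(blocks G)} (hA : A ≠ Bs) (hC : C ≠ Bs) {x : V}
    (hxA : x ∈ (A : Set V)) (hxC : x ∈ (C : Set V)) (hxB : x ∉ (Bs : Set V)) :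
    (T.induce {X : ↥(blocks G) | X ≠ Bs}).Reachable ⟨A, hA⟩ ⟨C, hC⟩ := by
  classical
  obtain ⟨w⟩ := hTree.isConnected.preconnected A C
  let p := w.toPath
  have hmem := path_mem hT p.2 hxA hxC
  have hs : ∀ D ∈ (p : T.Walk A C).support, D ∈ {X : ↥(blocks G) | X ≠ Bs} := by
    intro D hD hDB
    apply hxB
    rw [← hDB]
    exact hmem D hD
  exact reach_induce_of_walk (p : T.Walk A C) hs

noncomputable section Comps

variable {V : Type*} [Fintype V] {G : SimpleGraph V}

/-- the graph `T - Bs` -/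
abbrev Hgr (T : SimpleGraph ↥(blocks G)) (Bs : ↥(blocks G)) : SimpleGraph {X : ↥(blocks G) // X ∈ {X : ↥(blocks G) | X ≠ Bs}} :=
  T.induce {X : ↥(blocks G) | X ≠ Bs}

instance fintypeCC (T : SimpleGraph ↥(blocks G)) (Bs : ↥(blocks G)) :
    Fintype (Hgr T Bs).ConnectedComponent := Fintype.ofFinite _

/-- vertices of `G` in the blocks of the component `c` of `T - Bs`, away from `Bs` -/
def Ucomp (T : SimpleGraph ↥(blocks G)) (Bs : ↥(blocks G))
    (c : (Hgr T Bs).ConnectedComponent) : Set V :=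
  {x | ∃ A : ↥(blocks G), ∃ hA : A ≠ Bs,
    (Hgr T Bs).connectedComponentMk ⟨A, hA⟩ = c ∧ x ∈ (A : Set V) ∧ x ∉ (Bs : Set V)}

/-- maximal component weight -/
def fmax (T : SimpleGraph ↥(blocks G)) (Bs : ↥(blocks G)) : ℕ :=
  Finset.univ.sup (fun c : (Hgr T Bs).ConnectedComponent => (Ucomp T Bs c).ncard)

variable {T : SimpleGraph ↥(blocks G)}

lemma Ucomp_disjoint (hTree : T.IsTree) (hT : T ≤ blockGraph G) (Bs : ↥(blocks G))
    {c c' : (Hgr T Bs).ConnectedComponent} (hcc : c ≠ c') :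
    Disjoint (Ucomp T Bs c) (Ucomp T Bs c') := by
  rw [Set.disjoint_left]
  rintro x ⟨A, hA, hmk, hxA, hxB⟩ ⟨A', hA', hmk', hxA', _⟩
  apply hcc
  rw [← hmk, ← hmk']
  exact SimpleGraph.ConnectedComponent.sound (key_reach hTree hT hA hA' hxA hxA' hxB)

lemma Ucomp_cover (Bs : ↥(blocks G)) {x : V} (hx : x ∉ (Bs : Set V)) :
    ∃ c, x ∈ Ucomp T Bs c := by
  obtain ⟨B, hB, hxB⟩ := exists_block_superset (blockProp_singleton x (G := G))
  have hxB' : x ∈ B := hxB rfl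
  have hABs : (⟨B, hB⟩ : ↥(blocks G)) ≠ Bs := by
    intro h
    apply hx
    rw [← h]
    exact hxB'
  exact ⟨(Hgr T Bs).connectedComponentMk ⟨⟨B, hB⟩, hABs⟩, ⟨B, hB⟩, hABs, rfl, hxB', hx⟩

lemma Ucomp_union (Bs : ↥(blocks G)) :
    (⋃ c, Ucomp T Bs c) = ((Bs : Set V))ᶜ := by
  ext x
  simp only [Set.mem_iUnion, Set.mem_compl_iff]
  constructor
  · rintro ⟨c, A, hA, hmk, hxA, hxB⟩
    exact hxB
  · intro hx
    exact Ucomp_cover Bs hx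

/-- disjoint union count -/
lemma ncard_biUnion_eq {α β : Type*} [Finite α] (Q : Finset β) (f : β → Set α)
    (hdisj : ∀ a ∈ Q, ∀ b ∈ Q, a ≠ b → Disjoint (f a) (f b)) :
    (⋃ b ∈ Q, f b).ncard = ∑ b ∈ Q, (f b).ncard := by
  classical
  induction Q using Finset.induction with
  | empty => simp
  | insert a Q ha ih =>
    have hdisj2 : Disjoint (f a) (⋃ b ∈ Q, f b) := by
      apply Set.disjoint_iUnion₂_right.mpr
      intro b hb
      exact hdisj a (Finset.mem_insert_self a Q) b
        (Finset.mem_insert_of_mem hb) (fun h => ha (h ▸ hb))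
    rw [Finset.sum_insert ha, Finset.set_biUnion_insert,
      Set.ncard_union_eq hdisj2 (Set.toFinite _) (Set.toFinite _),
      ih (fun u hu v hv huv => hdisj u (Finset.mem_insert_of_mem hu)
        v (Finset.mem_insert_of_mem hv) huv)]

lemma Ucomp_sum (hTree : T.IsTree) (hT : T ≤ blockGraph G) (Bs : ↥(blocks G)) :
    (∑ c, (Ucomp T Bs c).ncard) + (Bs : Set V).ncard = Fintype.card V := by
  have h1 : (⋃ c ∈ Finset.univ, Ucomp T Bs c).ncard
      = ∑ c ∈ Finset.univ, (Ucomp T Bs c).ncard :=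
    ncard_biUnion_eq _ _ (fun a _ b _ hab => Ucomp_disjoint hTree hT Bs hab)
  have h2 : (⋃ c ∈ Finset.univ, Ucomp T Bs c) = ((Bs : Set V))ᶜ := by
    rw [← Ucomp_union (T := T) Bs]
    simp
  rw [h2] at h1
  have h3 := Set.ncard_add_ncard_compl (Bs : Set V)
  rw [Nat.card_eq_fintype_card] at h3
  omega

lemma Ucomp_le_fmax (Bs : ↥(blocks G)) (c : (Hgr T Bs).ConnectedComponent) :
    (Ucomp T Bs c).ncard ≤ fmax T Bs :=
  Finset.le_sup (f := fun c => (Ucomp T Bs c).ncard) (Finset.mem_univ c)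

/-- The descent step: if the heaviest branch has more than half the weight,
the maximum decreases by moving into it. -/
lemma descent (hG : G.Connected) (hTree : T.IsTree) (hT : T ≤ blockGraph G)
    (hcard : 1 < Fintype.card V)
    {Bs : ↥(blocks G)} (hf : Fintype.card V + 1 ≤ 2 * fmax T Bs) :
    ∃ D, fmax T D < fmax T Bs := by
  classical
  set n := Fintype.card V with hn
  set w₀ := fmax T Bs with hw₀
  have hw₀pos : 1 ≤ w₀ := by omega
  -- find the heavy component
  have hne : Nonempty ((Hgr T Bs).ConnectedComponent) := by
    by_contra h
    rw [not_nonempty_iff] at h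
    have : fmax T Bs = 0 := by
      rw [fmax, Finset.univ_eq_empty, Finset.sup_empty]
      rfl
    omega
  obtain ⟨c₀, _, hc₀⟩ := Finset.exists_mem_eq_sup (Finset.univ) Finset.univ_nonempty
    (fun c : (Hgr T Bs).ConnectedComponent => (Ucomp T Bs c).ncard)
  have hc₀w : (Ucomp T Bs c₀).ncard = w₀ := hc₀.symm
  -- a representative block of c₀
  obtain ⟨v₀, hv₀⟩ := c₀.exists_rep
  obtain ⟨A₀, hA₀⟩ := v₀
  -- the neighbour of Bs inside c₀
  obtain ⟨D, hadjD, hD, hreachD⟩ := exists_nbr_reach hTree.isConnected hA₀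
  have hmkD : (Hgr T Bs).connectedComponentMk ⟨D, hD⟩ = c₀ := by
    rw [← hv₀]
    exact (SimpleGraph.ConnectedComponent.sound hreachD).symm
  have hBsD : Bs ≠ D := hD.symm  -- as vertices
  -- D \ Bs is inside U c₀ and nonempty
  have hDsub : (D : Set V) \ (Bs : Set V) ⊆ Ucomp T Bs c₀ := by
    intro x hx
    exact ⟨D, hD, hmkD, hx.1, hx.2⟩
  have hDBs_ne : (D : Set V) ≠ (Bs : Set V) := fun h => hD (Subtype.coe_injective h)
  have hDnonempty : ((D : Set V) \ (Bs : Set V)).Nonempty := by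
    rw [Set.nonempty_iff_ne_empty]
    intro hemp
    have hsub : (D : Set V) ⊆ (Bs : Set V) := by
      rw [Set.diff_eq_empty] at hemp
      exact hemp
    have h2 : 2 ≤ (D : Set V).ncard := block_two_le hG hcard D.2
    obtain ⟨x, y, hx, hy, hxy⟩ := (Set.one_lt_ncard_iff (s := (D : Set V)) (Set.toFinite _)).mp (by omega)
    exact hxy (inter_subsingleton D.2 Bs.2 hDBs_ne ⟨hx, hsub hx⟩ ⟨hy, hsub hy⟩)
  have hDcard : 1 ≤ ((D : Set V) \ (Bs : Set V)).ncard :=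
    (Set.ncard_pos (Set.toFinite _)).mpr hDnonempty
  refine ⟨D, ?_⟩
  set cB := (Hgr T D).connectedComponentMk ⟨Bs, hBsD⟩ with hcB
  have hkey : ∀ d : (Hgr T D).ConnectedComponent, (Ucomp T D d).ncard ≤ w₀ - 1 := by
    intro d
    by_cases hdcB : d = cB
    · -- back component
      subst hdcB
      have hsub : Ucomp T D cB ⊆ ((Bs : Set V) \ (D : Set V)) ∪
          (⋃ c' ∈ Finset.univ.erase c₀, Ucomp T Bs c') := by
        intro x hx
        obtain ⟨A, hA, hmk, hxA, hxD⟩ := hx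
        by_cases hxBs : x ∈ (Bs : Set V)
        · exact Or.inl ⟨hxBs, hxD⟩
        · right
          have hABs : A ≠ Bs := by
            intro h
            apply hxBs
            rw [← h]
            exact hxA
          have hc'ne : (Hgr T Bs).connectedComponentMk ⟨A, hABs⟩ ≠ c₀ := by
            intro hceq
            have hr2 : (Hgr T Bs).Reachable ⟨A, hABs⟩ ⟨D, hD⟩ :=
              SimpleGraph.ConnectedComponent.exact (hceq.trans hmkD.symm)
            have hr1 : (Hgr T D).Reachable ⟨A, hA⟩ ⟨Bs, hBsD⟩ :=
              SimpleGraph.ConnectedComponent.exact (hmk.trans hcB)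
            exact tree_sep hTree hadjD hABs hA hr1 hr2
          exact Set.mem_biUnion (Finset.mem_erase.mpr ⟨hc'ne, Finset.mem_univ _⟩)
            ⟨A, hABs, rfl, hxA, hxBs⟩
      have h7a := Set.ncard_le_ncard hsub (Set.toFinite _)
      have h7b := Set.ncard_union_le ((Bs : Set V) \ (D : Set V))
        (⋃ c' ∈ Finset.univ.erase c₀, Ucomp T Bs c')
      have h7c : (⋃ c' ∈ Finset.univ.erase c₀, Ucomp T Bs c').ncard
          = ∑ c' ∈ Finset.univ.erase c₀, (Ucomp T Bs c').ncard :=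
        ncard_biUnion_eq _ _ (fun a _ b _ hab => Ucomp_disjoint hTree hT Bs hab)
      have hsum2 : ∑ c' ∈ Finset.univ.erase c₀, (Ucomp T Bs c').ncard
          + (Ucomp T Bs c₀).ncard = ∑ c', (Ucomp T Bs c').ncard :=
        Finset.sum_erase_add _ _ (Finset.mem_univ c₀)
      have hU := Ucomp_sum hTree hT Bs
      have h8 : ((Bs : Set V) \ (D : Set V)).ncard ≤ (Bs : Set V).ncard :=
        Set.ncard_le_ncard Set.diff_subset (Set.toFinite _)
      omega
    · -- forward component
      have hsub : Ucomp T D d ⊆ Ucomp T Bs c₀ \ ((D : Set V) \ (Bs : Set V)) := by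
        intro x hx
        obtain ⟨A, hA, hmk, hxA, hxD⟩ := hx
        have hABs : A ≠ Bs := by
          intro h
          apply hdcB
          rw [← hmk, hcB]
          congr 1
          exact Subtype.ext h
        have hxBs : x ∉ (Bs : Set V) := by
          intro hxBs
          apply hdcB
          rw [← hmk, hcB]
          exact SimpleGraph.ConnectedComponent.sound
            (key_reach hTree hT hA hBsD hxA hxBs hxD)
        have hnr : ¬ (Hgr T D).Reachable ⟨A, hA⟩ ⟨Bs, hBsD⟩ := by
          intro hr
          apply hdcB
          rw [← hmk, hcB]
          exact SimpleGraph.ConnectedComponent.sound hr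
        have hreach := tree_switch hTree.isConnected hadjD hABs hA hnr
        have hmkA : (Hgr T Bs).connectedComponentMk ⟨A, hABs⟩ = c₀ := by
          rw [← hmkD]
          exact SimpleGraph.ConnectedComponent.sound hreach
        exact ⟨⟨A, hABs, hmkA, hxA, hxBs⟩, fun hmem => hxD hmem.1⟩
      have h5 := Set.ncard_le_ncard hsub (Set.toFinite _)
      have h6 : (Ucomp T Bs c₀ \ ((D : Set V) \ (Bs : Set V))).ncard
          = (Ucomp T Bs c₀).ncard - ((D : Set V) \ (Bs : Set V)).ncard :=
        Set.ncard_diff hDsub (Set.toFinite _)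
      omega
  have hfD : fmax T D ≤ w₀ - 1 := Finset.sup_le (fun d _ => hkey d)
  omega

end Comps

end Aux2

lemma exists_subset_sum_between {β : Type*} [DecidableEq β] (s : Finset β) (f : β → ℕ) (M t : ℕ)
    (hf : ∀ a ∈ s, f a ≤ M) (ht : t ≤ ∑ a ∈ s, f a) :
    ∃ P ⊆ s, t ≤ ∑ a ∈ P, f a ∧ ∑ a ∈ P, f a ≤ t + M := by
  induction s using Finset.induction with
  | empty =>
    refine ⟨∅, Finset.Subset.refl _, ?_, ?_⟩ <;> simp_all <;> omega
  | insert a s' ha ih =>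
    rw [Finset.sum_insert ha] at ht
    by_cases hts : t ≤ ∑ x ∈ s', f x
    · obtain ⟨P, hPs, h1, h2⟩ := ih (fun b hb => hf b (Finset.mem_insert_of_mem hb)) hts
      exact ⟨P, hPs.trans (Finset.subset_insert a s'), h1, h2⟩
    · refine ⟨insert a s', Finset.Subset.refl _, ?_, ?_⟩
      · rw [Finset.sum_insert ha]; omega
      · rw [Finset.sum_insert ha]
        have := hf a (Finset.mem_insert_self a s')
        omega


/-- If every block of a connected graph `G` on `n` vertices has fewer than `n/4`
vertices, then in any reduced block tree `T` there are a block `B*` and a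
red/blue colouring of the remaining blocks such that every component of `T - B*`
is monochromatic and the corresponding vertex classes `S_red`, `S_blue` satisfy
`|S_blue| ≤ |S_red| ≤ 3|S_blue|`. -/
theorem balanced_reduced_block_tree {V : Type*} [Fintype V] (G : SimpleGraph V)
    (hG : G.Connected)
    (hsmall : ∀ B ∈ blocks G, (B.ncard : ℝ) < (Fintype.card V : ℝ) / 4)
    (T : SimpleGraph ↥(blocks G)) (hT : T ≤ blockGraph G) (hTree : T.IsTree) :
    ∃ (Bs : ↥(blocks G)) (φ : ↥(blocks G) → Bool),
      (∀ (A C : ↥(blocks G)) (hA : A ≠ Bs) (hC : C ≠ Bs),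
        (T.induce {X : ↥(blocks G) | X ≠ Bs}).Reachable ⟨A, hA⟩ ⟨C, hC⟩ → φ A = φ C) ∧
      (colourClass G Bs φ false).ncard ≤ (colourClass G Bs φ true).ncard ∧
      (colourClass G Bs φ true).ncard ≤ 3 * (colourClass G Bs φ false).ncard := by
  classical
  have hNe : Nonempty ↥(blocks G) := hTree.isConnected.nonempty
  set n := Fintype.card V with hn
  -- numeric smallness in ℕ
  have hsmallN : ∀ Bv : ↥(blocks G), 4 * (Bv : Set V).ncard + 1 ≤ n := by
    intro Bv
    have h := hsmall Bv Bv.2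
    have h4 : ((4 : ℝ) * (Bv : Set V).ncard) < n := by
      rw [lt_div_iff₀ (by norm_num : (0:ℝ) < 4)] at h
      linarith
    have : (4 * (Bv : Set V).ncard : ℕ) < n := by exact_mod_cast h4
    omega
  -- n is big
  obtain ⟨B₁⟩ := hNe
  have hn0 : 0 < n := by
    have := hsmallN B₁
    omega
  have hNeV : Nonempty V := Fintype.card_pos_iff.mp hn0
  have hcard : 1 < n := by
    have h1 : 1 ≤ (B₁ : Set V).ncard :=
      (Set.ncard_pos (Set.toFinite _)).mpr (block_nonempty B₁.2)
    have := hsmallN B₁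
    omega
  have hn9 : 8 < n := by
    have h2 : 2 ≤ (B₁ : Set V).ncard := block_two_le hG hcard B₁.2
    have := hsmallN B₁
    omega
  -- the centroid block
  haveI : Nonempty ↥(blocks G) := ⟨B₁⟩
  obtain ⟨Bs, hBs⟩ := Finite.exists_min (fmax T)
  have hhalf : 2 * fmax T Bs ≤ n := by
    by_contra h
    obtain ⟨D, hD⟩ := descent (Bs := Bs) hG hTree hT hcard (by omega)
    have h2 := hBs D
    omega
  -- weights
  set w : (Hgr T Bs).ConnectedComponent → ℕ := fun c => (Ucomp T Bs c).ncard with hw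
  set W := ∑ c, w c with hW
  have hWsum : W + (Bs : Set V).ncard = n := Ucomp_sum hTree hT Bs
  have hW4 : 3 * n + 1 ≤ 4 * W := by
    have := hsmallN Bs
    omega
  have hwle : ∀ c, 2 * w c ≤ n := by
    intro c
    have h1 : w c ≤ fmax T Bs :=
      Finset.le_sup (f := fun c => (Ucomp T Bs c).ncard) (Finset.mem_univ c)
    omega
  -- choose a subset of components P with W ≤ 4 ∑_P w ≤ 3W
  have hchoice : ∃ P : Finset ((Hgr T Bs).ConnectedComponent),
      W ≤ 4 * ∑ c ∈ P, w c ∧ 4 * ∑ c ∈ P, w c ≤ 3 * W := by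
    by_cases hbig : ∃ c, W ≤ 4 * w c
    · obtain ⟨c, hc⟩ := hbig
      refine ⟨{c}, ?_, ?_⟩ <;> rw [Finset.sum_singleton]
      · exact hc
      · have := hwle c
        omega
    · push_neg at hbig
      have hsum4 : ∑ c, (fun c => 4 * w c) c = 4 * W := by
        rw [hW, Finset.mul_sum]
      obtain ⟨P, _, h1, h2⟩ := exists_subset_sum_between Finset.univ (fun c => 4 * w c)
        (W - 1) W (fun a _ => by show 4 * w a ≤ W - 1; have := hbig a; omega)
        (by rw [hsum4]; omega)
      refine ⟨P, ?_, ?_⟩ <;> rw [← Finset.mul_sum] at h1 h2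
      · exact h1
      · omega
  obtain ⟨P₀, hP₀1, hP₀2⟩ := hchoice
  -- swap if necessary to make the "true" side the big one
  have hsplit : ∑ c ∈ P₀, w c + ∑ c ∈ P₀ᶜ, w c = W := Finset.sum_add_sum_compl P₀ w
  obtain ⟨P, hP1, hP2⟩ : ∃ P : Finset ((Hgr T Bs).ConnectedComponent),
      W ≤ 2 * ∑ c ∈ P, w c ∧ 4 * ∑ c ∈ P, w c ≤ 3 * W := by
    by_cases hs : W ≤ 2 * ∑ c ∈ P₀, w c
    · exact ⟨P₀, hs, hP₀2⟩
    · refine ⟨P₀ᶜ, by omega, by omega⟩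
  have hsplitP : ∑ c ∈ P, w c + ∑ c ∈ Pᶜ, w c = W := Finset.sum_add_sum_compl P w
  -- the colouring
  set φ : ↥(blocks G) → Bool := fun A =>
    if h : A = Bs then true
    else if (Hgr T Bs).connectedComponentMk ⟨A, h⟩ ∈ P then true else false with hφ
  refine ⟨Bs, φ, ?_, ?_, ?_⟩
  · -- monochromatic components
    intro A C hA hC hreach
    have hmk : (Hgr T Bs).connectedComponentMk ⟨A, hA⟩
        = (Hgr T Bs).connectedComponentMk ⟨C, hC⟩ :=
      SimpleGraph.ConnectedComponent.sound hreach
    simp only [hφ, dif_neg hA, dif_neg hC, hmk]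
  all_goals {
    have hCCtrue : colourClass G Bs φ true = ⋃ c ∈ P, Ucomp T Bs c := by
      ext x
      constructor
      · rintro ⟨A, hA, hφA, hxA, hxBs⟩
        simp only [hφ, dif_neg hA] at hφA
        by_cases hm : (Hgr T Bs).connectedComponentMk ⟨A, hA⟩ ∈ P
        · exact Set.mem_biUnion hm ⟨A, hA, rfl, hxA, hxBs⟩
        · rw [if_neg hm] at hφA; exact absurd hφA (by simp)
      · intro hx
        rw [Set.mem_iUnion₂] at hx
        obtain ⟨c, hc, A, hA, hmk, hxA, hxBs⟩ := hx
        refine ⟨A, hA, ?_, hxA, hxBs⟩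
        simp only [hφ, dif_neg hA, hmk, if_pos hc]
    have hCCfalse : colourClass G Bs φ false = ⋃ c ∈ Pᶜ, Ucomp T Bs c := by
      ext x
      constructor
      · rintro ⟨A, hA, hφA, hxA, hxBs⟩
        simp only [hφ, dif_neg hA] at hφA
        by_cases hm : (Hgr T Bs).connectedComponentMk ⟨A, hA⟩ ∈ P
        · rw [if_pos hm] at hφA; exact absurd hφA (by simp)
        · exact Set.mem_biUnion (Finset.mem_compl.mpr hm) ⟨A, hA, rfl, hxA, hxBs⟩
      · intro hx
        rw [Set.mem_iUnion₂] at hx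
        obtain ⟨c, hc, A, hA, hmk, hxA, hxBs⟩ := hx
        refine ⟨A, hA, ?_, hxA, hxBs⟩
        rw [Finset.mem_compl] at hc
        simp only [hφ, dif_neg hA, hmk, if_neg hc]
    have hct : (colourClass G Bs φ true).ncard = ∑ c ∈ P, w c := by
      rw [hCCtrue]
      exact ncard_biUnion_eq _ _ (fun a _ b _ hab => Ucomp_disjoint hTree hT Bs hab)
    have hcf : (colourClass G Bs φ false).ncard = ∑ c ∈ Pᶜ, w c := by
      rw [hCCfalse]
      exact ncard_biUnion_eq _ _ (fun a _ b _ hab => Ucomp_disjoint hTree hT Bs hab)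
    rw [hct, hcf]
    omega }
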